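/- arXiv:2605.25132 — 4 statements merged into one kernel-verified Lean document; each statement's English description precedes it below -/
import Mathlib

section
/- With M as above and e⁽⁰⁾ = (w,x,y,z) a probability vector, the first component of M^{N−1} e⁽⁰⁾ equals (1/4)(1 + λ₁^N + λ₂^N + λ₃^N), where λ₁ = w + x − y − z, λ₂ = w − x + y − z, λ₃ = w − x − y + z. -/
/-- The swap transformation matrix with rows `(w,x,y,z), (x,w,z,y), (y,z,w,x), (z,y,x,w)`. -/
def swapMatrix (w x y z : ℝ) : Matrix (Fin 4) (Fin 4) ℝ :=
  !![w, x, y, z; x, w, z, y; y, z, w, x; z, y, x, w]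

lemma swapMatrix_pow_mulVec (w x y z : ℝ) (hsum : w + x + y + z = 1) (n : ℕ) :
    (swapMatrix w x y z ^ n).mulVec ![w, x, y, z] =
      ![(1 + (w + x - y - z) ^ (n+1) + (w - x + y - z) ^ (n+1) + (w - x - y + z) ^ (n+1)) / 4,
        (1 + (w + x - y - z) ^ (n+1) - (w - x + y - z) ^ (n+1) - (w - x - y + z) ^ (n+1)) / 4,
        (1 - (w + x - y - z) ^ (n+1) + (w - x + y - z) ^ (n+1) - (w - x - y + z) ^ (n+1)) / 4,
        (1 - (w + x - y - z) ^ (n+1) - (w - x + y - z) ^ (n+1) + (w - x - y + z) ^ (n+1)) / 4] := by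
  induction n with
  | zero =>
    funext i
    fin_cases i <;>
      simp [Matrix.mulVec, dotProduct, swapMatrix, Fin.sum_univ_four] <;> linarith
  | succ n ih =>
    rw [pow_succ', ← Matrix.mulVec_mulVec, ih]
    funext i
    fin_cases i <;>
      simp [Matrix.mulVec, dotProduct, swapMatrix, Fin.sum_univ_four, pow_succ] <;>
      nlinarith [sq_nonneg w]

/-- For a probability vector `e⁰ = (w,x,y,z)`, the first component of `M^{N−1} e⁰` equals
`(1 + λ₁^N + λ₂^N + λ₃^N)/4` where `λ₁ = w+x−y−z`, `λ₂ = w−x+y−z`, `λ₃ = w−x−y+z`.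
This is the fidelity after `N−1` entanglement swaps on a chain of `N` identical links. -/
theorem swapMatrix_pow_apply_zero (w x y z : ℝ)
    (hw : 0 ≤ w) (hx : 0 ≤ x) (hy : 0 ≤ y) (hz : 0 ≤ z) (hsum : w + x + y + z = 1)
    (N : ℕ) (hN : 1 ≤ N) :
    ((swapMatrix w x y z ^ (N - 1)).mulVec ![w, x, y, z]) 0 =
      (1 + (w + x - y - z) ^ N + (w - x + y - z) ^ N + (w - x - y + z) ^ N) / 4 := by
  rw [swapMatrix_pow_mulVec w x y z hsum, Nat.sub_add_cancel hN]
  rfl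
end

section
/- Let H_C be a diagonal N×N real matrix with diagonal entries C(z), and let H_G = I − |ψ₀⟩⟨ψ₀| where |ψ₀⟩ is the uniform superposition vector with all entries 1/√N. Then the spectral norm of the commutator [H_C, H_G] equals the standard deviation σ_C = sqrt( (1/N) Σ_z (C(z) − C_avg)² ) of the diagonal values, where C_avg = (1/N) Σ_z C(z). -/
open Finset

private lemma comm_matrix_eq (N : ℕ) (C : Fin N → ℝ) :
    (Matrix.diagonal C * ((1 : Matrix (Fin N) (Fin N) ℝ) - Matrix.of fun _ _ => (N : ℝ)⁻¹) -
         ((1 : Matrix (Fin N) (Fin N) ℝ) - Matrix.of fun _ _ => (N : ℝ)⁻¹) * Matrix.diagonal C)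
    = Matrix.of fun i j => (C j - C i) * (N : ℝ)⁻¹ := by
  ext i j
  simp [Matrix.mul_sub, Matrix.sub_mul, Matrix.sub_apply, Matrix.mul_apply,
    Matrix.diagonal_apply, Matrix.one_apply, ite_mul, mul_ite, Finset.sum_ite_eq,
    Finset.sum_ite_eq']
  ring

/-- For `H_C = diag(C)` and the Grover Hamiltonian `H_G = I − |ψ₀⟩⟨ψ₀|` with `|ψ₀⟩` the uniform
superposition (so `|ψ₀⟩⟨ψ₀|` has all entries `1/N`), the spectral norm of the commutator
`[H_C, H_G]` equals the standard deviation `σ_C` of the diagonal values. -/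
theorem commutator_norm_eq_stddev (N : ℕ) (hN : 0 < N) (C : Fin N → ℝ) :
    ‖(Matrix.toEuclideanCLM (𝕜 := ℝ) (n := Fin N)
        (Matrix.diagonal C * ((1 : Matrix (Fin N) (Fin N) ℝ) - Matrix.of fun _ _ => (N : ℝ)⁻¹) -
         ((1 : Matrix (Fin N) (Fin N) ℝ) - Matrix.of fun _ _ => (N : ℝ)⁻¹) * Matrix.diagonal C))‖ =
      Real.sqrt ((∑ z, (C z - (∑ z, C z) / N) ^ 2) / N) := by
  have hN' : (N : ℝ) ≠ 0 := Nat.cast_ne_zero.mpr hN.ne'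
  have hNpos : (0:ℝ) < N := Nat.cast_pos.mpr hN
  set μ : ℝ := (∑ z, C z) / N with hμ
  set V : ℝ := ∑ z, (C z - μ) ^ 2 with hV
  have hVnonneg : 0 ≤ V := Finset.sum_nonneg fun i _ => sq_nonneg _
  set T := Matrix.toEuclideanCLM (𝕜 := ℝ) (n := Fin N)
        (Matrix.diagonal C * ((1 : Matrix (Fin N) (Fin N) ℝ) - Matrix.of fun _ _ => (N : ℝ)⁻¹) -
         ((1 : Matrix (Fin N) (Fin N) ℝ) - Matrix.of fun _ _ => (N : ℝ)⁻¹) * Matrix.diagonal C)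
    with hT
  -- the action of T
  have happ : ∀ (x : EuclideanSpace ℝ (Fin N)) (i : Fin N),
      T x i = ((∑ j, C j * x j) - C i * (∑ j, x j)) / N := by
    intro x i
    have h := congrFun (Matrix.ofLp_toEuclideanCLM (𝕜 := ℝ) (n := Fin N)
      (Matrix.diagonal C * ((1 : Matrix (Fin N) (Fin N) ℝ) - Matrix.of fun _ _ => (N : ℝ)⁻¹) -
         ((1 : Matrix (Fin N) (Fin N) ℝ) - Matrix.of fun _ _ => (N : ℝ)⁻¹) * Matrix.diagonal C)
      x) i
    rw [comm_matrix_eq] at h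
    have h2 : T x i = ∑ j, (C j - C i) * (N : ℝ)⁻¹ * x j := by
      rw [hT, comm_matrix_eq]
      simpa [Matrix.toLin'_apply, Matrix.mulVec, dotProduct] using h
    rw [h2, Finset.mul_sum, ← Finset.sum_sub_distrib, div_eq_mul_inv, Finset.sum_mul]
    exact Finset.sum_congr rfl fun j _ => by ring
  -- zero-sum fact
  have hsum0 : ∑ i, (C i - μ) = 0 := by
    rw [Finset.sum_sub_distrib, Finset.sum_const, Finset.card_univ, Fintype.card_fin,
      nsmul_eq_mul, hμ]
    field_simp
    ring
  -- norm squared of T x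
  have hnormsq : ∀ x : EuclideanSpace ℝ (Fin N), ‖T x‖ ^ 2 = ∑ i, (T x i) ^ 2 := by
    intro x
    rw [EuclideanSpace.norm_eq, Real.sq_sqrt (Finset.sum_nonneg fun i _ => sq_nonneg _)]
    simp [Real.norm_eq_abs, sq_abs]
  have hxnormsq : ∀ x : EuclideanSpace ℝ (Fin N), ‖x‖ ^ 2 = ∑ i, (x i) ^ 2 := by
    intro x
    rw [EuclideanSpace.norm_eq, Real.sq_sqrt (Finset.sum_nonneg fun i _ => sq_nonneg _)]
    simp [Real.norm_eq_abs, sq_abs]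
  -- key upper bound on the squared sums
  have hkey : ∀ x : EuclideanSpace ℝ (Fin N),
      ∑ i, (T x i) ^ 2 ≤ (V / N) * ∑ i, (x i) ^ 2 := by
    intro x
    set S := ∑ j, x j with hS
    set W := ∑ j, C j * x j with hW
    -- Cauchy-Schwarz
    have hCS : (∑ i, (C i - μ) * (x i - S / N)) ^ 2 ≤
        V * ∑ i, (x i - S / N) ^ 2 :=
      Finset.sum_mul_sq_le_sq_mul_sq _ _ _
    have h1 : ∑ i, (C i - μ) * (x i - S / N) = W - μ * S := by
      have : ∀ i, (C i - μ) * (x i - S / N) =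
          (C i * x i - μ * x i) - (S / N) * (C i - μ) := by intro i; ring
      simp_rw [this, Finset.sum_sub_distrib, ← Finset.mul_sum, hsum0, mul_zero]
      simp [hW, hS, Finset.mul_sum]
    have h2 : ∑ i, (x i - S / N) ^ 2 = (∑ i, (x i) ^ 2) - S ^ 2 / N := by
      have : ∀ i, (x i - S / N) ^ 2 =
          (x i) ^ 2 - (2 * S / N) * x i + (S / N) ^ 2 := by intro i; ring
      simp_rw [this, Finset.sum_add_distrib, Finset.sum_sub_distrib, ← Finset.mul_sum,
        Finset.sum_const, Finset.card_univ, Fintype.card_fin, nsmul_eq_mul, ← hS]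
      field_simp
      ring
    have h3 : ∑ i, (T x i) ^ 2 = ((W - μ * S) ^ 2 * N + S ^ 2 * V) / N ^ 2 := by
      have he : ∀ i, (T x i) ^ 2 =
          ((W - μ * S) ^ 2 + 2 * (W - μ * S) * S * (μ - C i) + S ^ 2 * (C i - μ) ^ 2) / N ^ 2 := by
        intro i
        rw [happ x i, ← hW, ← hS]
        field_simp
        ring
      simp_rw [he, ← Finset.sum_div]
      congr 1
      rw [Finset.sum_add_distrib, Finset.sum_add_distrib, ← Finset.mul_sum, ← Finset.mul_sum]
      have hsum0' : ∑ i, (μ - C i) = 0 := by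
        have : ∀ i, (μ - C i) = -(C i - μ) := fun i => by ring
        simp_rw [this, Finset.sum_neg_distrib, hsum0, neg_zero]
      rw [hsum0', mul_zero, add_zero, Finset.sum_const, Finset.card_univ, Fintype.card_fin,
        nsmul_eq_mul, ← hV]
      ring
    rw [h1, h2] at hCS
    set P := ∑ i, (x i) ^ 2 with hP
    have hCS2 : (W - μ * S) ^ 2 * N ≤ V * (P * N - S ^ 2) := by
      calc (W - μ * S) ^ 2 * N ≤ (V * (P - S ^ 2 / N)) * N :=
            mul_le_mul_of_nonneg_right hCS hNpos.le
        _ = V * (P * N - S ^ 2) := by field_simp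
    rw [h3, div_le_iff₀ (by positivity),
      show (V / ↑N * P) * (↑N:ℝ) ^ 2 = V * (P * ↑N) from by field_simp]
    nlinarith [hCS2]
  -- translate to norms
  have hbound : ∀ x : EuclideanSpace ℝ (Fin N), ‖T x‖ ≤ Real.sqrt (V / N) * ‖x‖ := by
    intro x
    have h1 : ‖T x‖ ^ 2 ≤ (V / N) * ‖x‖ ^ 2 := by
      rw [hnormsq, hxnormsq]; exact hkey x
    have h2 : ‖T x‖ ^ 2 ≤ (Real.sqrt (V / N) * ‖x‖) ^ 2 := by
      rw [mul_pow, Real.sq_sqrt (by positivity)]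
      exact h1
    calc ‖T x‖ = Real.sqrt (‖T x‖ ^ 2) := (Real.sqrt_sq (norm_nonneg _)).symm
      _ ≤ Real.sqrt ((Real.sqrt (V / N) * ‖x‖) ^ 2) := Real.sqrt_le_sqrt h2
      _ = Real.sqrt (V / N) * ‖x‖ := Real.sqrt_sq (by positivity)
  refine le_antisymm (T.opNorm_le_bound (Real.sqrt_nonneg _) hbound) ?_
  -- lower bound: apply to the all-ones vector
  set o : EuclideanSpace ℝ (Fin N) := (WithLp.equiv 2 (Fin N → ℝ)).symm (fun _ => 1) with ho
  have hoi : ∀ i, o i = 1 := fun i => rfl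
  have hono : ‖o‖ = Real.sqrt N := by
    rw [EuclideanSpace.norm_eq]
    simp [hoi]
  have hTo : ∀ i, T o i = μ - C i := by
    intro i
    rw [happ o i]
    simp only [hoi, mul_one]
    rw [Finset.sum_const, Finset.card_univ, Fintype.card_fin, nsmul_eq_mul, mul_one]
    field_simp [hμ]
    rw [hμ, mul_sub, mul_div_cancel₀ _ hN']; ring
  have hToNorm : ‖T o‖ = Real.sqrt V := by
    rw [EuclideanSpace.norm_eq]
    congr 1
    simp_rw [Real.norm_eq_abs, sq_abs, hTo]
    apply Finset.sum_congr rfl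
    intro i _
    ring
  have hle := T.le_opNorm o
  rw [hToNorm, hono] at hle
  have hsq : Real.sqrt V = Real.sqrt (V / N) * Real.sqrt N := by
    rw [← Real.sqrt_mul (by positivity), div_mul_cancel₀ _ hN']
  rw [hsq] at hle
  have hNsqrt : (0:ℝ) < Real.sqrt N := Real.sqrt_pos.mpr hNpos
  exact le_of_mul_le_mul_right hle hNsqrt
end

section
/- Let H₀, H₁ be Hermitian operators on a finite-dimensional Hilbert space and P₀ a Hermitian projector commuting with H₀. For any sequence of real angles β₁, γ₁, …, β_p, γ_p, let |ψ_p⟩ = e^{−iβ_p H₀} e^{−iγ_p H₁} ⋯ e^{−iβ₁ H₀} e^{−iγ₁ H₁} |ψ₀⟩ for a unit vector |ψ₀⟩. Then |⟨ψ_p|P₀|ψ_p⟩ − ⟨ψ₀|P₀|ψ₀⟩| ≤ (Σ_{j=1}^p |γ_j|) · ‖[P₀, H₁]‖. -/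
set_option synthInstance.maxHeartbeats 1000000
set_option maxHeartbeats 1000000

open Finset Matrix
open NormedSpace
open scoped InnerProductSpace

section Aux
variable {E : Type*} [NormedAddCommGroup E] [InnerProductSpace ℂ E] [CompleteSpace E]

lemma aux_star_mul_self (T : E →L[ℂ] E) (hT : IsSelfAdjoint T) (c : ℂ) (hc : star c = -c) :
    star (exp (c • T)) * exp (c • T) = 1 := by
  letI : NormedAlgebra ℚ (E →L[ℂ] E) := NormedAlgebra.restrictScalars ℚ ℂ _
  rw [star_exp, star_smul, hT.star_eq, hc, neg_smul, ← NormedSpace.exp_add_of_commute (Commute.neg_left rfl),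
    neg_add_cancel, exp_zero]

lemma aux_norm_exp_le_one (T : E →L[ℂ] E) (hT : IsSelfAdjoint T) (c : ℂ) (hc : star c = -c) :
    ‖exp (c • T)‖ ≤ 1 := by
  have h := aux_star_mul_self T hT c hc
  have h2 : ‖exp (c • T)‖ * ‖exp (c • T)‖ = ‖(1 : E →L[ℂ] E)‖ := by
    rw [← CStarRing.norm_star_mul_self, h]
  have h3 : ‖(1 : E →L[ℂ] E)‖ ≤ 1 := ContinuousLinearMap.norm_id_le
  nlinarith [norm_nonneg (exp (c • T))]

lemma aux_inner_conj (U R : E →L[ℂ] E) (x : E) :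
    ⟪U x, R (U x)⟫_ℂ = ⟪x, (star U * R * U) x⟫_ℂ := by
  rw [ContinuousLinearMap.mul_apply, ContinuousLinearMap.mul_apply,
    ContinuousLinearMap.star_eq_adjoint, ContinuousLinearMap.adjoint_inner_right]

lemma aux_exp_quad_bound (R : E →L[ℂ] E) (x : E) (hx : ‖x‖ ≤ 1) :
    ‖⟪x, R x⟫_ℂ‖ ≤ ‖R‖ := by
  calc ‖⟪x, R x⟫_ℂ‖ ≤ ‖x‖ * ‖R x‖ := norm_inner_le_norm _ _
    _ ≤ 1 * (‖R‖ * 1) := by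
        apply mul_le_mul hx _ (norm_nonneg _) zero_le_one
        calc ‖R x‖ ≤ ‖R‖ * ‖x‖ := R.le_opNorm x
          _ ≤ ‖R‖ * 1 := by gcongr
    _ = ‖R‖ := by ring

lemma aux_conj_bound (T Q : E →L[ℂ] E) (hT : IsSelfAdjoint T) (γ : ℝ) :
    ‖star (exp ((-(Complex.I * γ)) • T)) * Q * exp ((-(Complex.I * γ)) • T) - Q‖ ≤
      |γ| * ‖Q * T - T * Q‖ := by
  set M : E →L[ℂ] E := Complex.I • T with hM
  have hsmul : ∀ t : ℝ, t • M = (Complex.I * (t : ℂ)) • T := by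
    intro t
    rw [hM, ← smul_assoc]
    congr 1
    rw [Complex.real_smul, mul_comm]
  have hsmul' : ∀ t : ℝ, t • (-M) = (-(Complex.I * (t : ℂ))) • T := by
    intro t
    rw [smul_neg, hsmul, neg_smul]
  have hRC : (exp : (E →L[ℂ] E) → _) = exp := rfl
  set g : ℝ → (E →L[ℂ] E) := fun t => exp (t • M) * Q * exp (t • (-M)) with hg
  set D : ℝ → (E →L[ℂ] E) :=
    fun t => exp (t • M) * (M * Q - Q * M) * exp (t • (-M)) with hD
  have hderiv : ∀ t : ℝ, HasDerivAt g (D t) t := by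
    intro t
    have h1 := (hasDerivAt_exp_smul_const M t).mul_const Q
    have h2 := hasDerivAt_exp_smul_const' (-M) t
    have h := h1.mul h2
    refine h.congr_deriv ?_
    rw [hD]
    noncomm_ring
  have hnorm1 : ∀ t : ℝ, ‖exp (t • M)‖ ≤ 1 := by
    intro t
    rw [hRC, hsmul]
    exact aux_norm_exp_le_one T hT _ (by simp [Complex.ext_iff])
  have hnorm2 : ∀ t : ℝ, ‖exp (t • (-M))‖ ≤ 1 := by
    intro t
    rw [hRC, hsmul']
    exact aux_norm_exp_le_one T hT _ (by simp [Complex.ext_iff])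
  have hbound : ∀ t : ℝ, ‖D t‖ ≤ ‖M * Q - Q * M‖ := by
    intro t
    calc ‖D t‖ ≤ ‖exp (t • M) * (M * Q - Q * M)‖ * ‖exp (t • (-M))‖ := norm_mul_le _ _
      _ ≤ ‖exp (t • M)‖ * ‖M * Q - Q * M‖ * ‖exp (t • (-M))‖ := by
          gcongr; exact norm_mul_le _ _
      _ ≤ 1 * ‖M * Q - Q * M‖ * 1 := by
          gcongr <;> [exact hnorm1 t; exact hnorm2 t]
      _ = ‖M * Q - Q * M‖ := by ring
  have hMVT := Convex.norm_image_sub_le_of_norm_hasDerivWithin_le (f := g) (f' := D)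
    (s := Set.univ) (fun x _ => (hderiv x).hasDerivWithinAt) (fun x _ => hbound x)
    convex_univ (Set.mem_univ (0 : ℝ)) (Set.mem_univ γ)
  have hg0 : g 0 = Q := by simp [hg, exp_zero]
  have hgγ : g γ = star (exp ((-(Complex.I * γ)) • T)) * Q *
      exp ((-(Complex.I * γ)) • T) := by
    rw [hg]
    have h1 : star (exp ((-(Complex.I * (γ : ℂ))) • T)) = exp (γ • M) := by
      rw [star_exp, star_smul, hT.star_eq, hRC, hsmul]
      congr 1
      simp [Complex.ext_iff]
    have h2 : exp ((-(Complex.I * (γ : ℂ))) • T) = exp (γ • (-M)) := by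
      rw [hRC, hsmul']
    rw [h1, h2]
  have hcomm : ‖M * Q - Q * M‖ = ‖Q * T - T * Q‖ := by
    have : M * Q - Q * M = -(Complex.I • (Q * T - T * Q)) := by
      rw [hM]; simp [smul_sub, smul_mul_assoc, mul_smul_comm]
    rw [this, norm_neg, norm_smul, Complex.norm_I, one_mul]
  rw [hgγ, hg0] at hMVT
  calc _ ≤ ‖M * Q - Q * M‖ * ‖γ - 0‖ := hMVT
    _ = |γ| * ‖Q * T - T * Q‖ := by rw [hcomm, sub_zero, Real.norm_eq_abs, mul_comm]

end Aux

/-- The QAOA state after `k` rounds: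
`ψ_{k+1} = e^{−iβ_k H₀} e^{−iγ_k H₁} ψ_k`, starting from `ψ₀`. -/
noncomputable def qaoaState {n : Type*} [Fintype n] [DecidableEq n]
    (H0 H1 : Matrix n n ℂ) (β γ : ℕ → ℝ) (ψ0 : n → ℂ) : ℕ → n → ℂ
  | 0 => ψ0
  | k + 1 =>
      (NormedSpace.exp ((-(Complex.I * (β k : ℂ))) • H0) *
        NormedSpace.exp ((-(Complex.I * (γ k : ℂ))) • H1)).mulVec
        (qaoaState H0 H1 β γ ψ0 k)

open scoped Matrix.Norms.L2Operator

/-- QAOA overlap lemma: for Hermitian `H₀, H₁`, a Hermitian projector `P₀` commuting with `H₀`,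
and a unit vector `ψ₀`, the expectation of `P₀` after `p` QAOA rounds changes by at most
`(Σ_{j} |γ_j|)·‖[P₀, H₁]‖`. -/
theorem qaoa_overlap_change_bound {n : Type*} [Fintype n] [DecidableEq n]
    (H0 H1 P0 : Matrix n n ℂ) (hH0 : H0.IsHermitian) (hH1 : H1.IsHermitian)
    (hP0 : P0.IsHermitian) (hproj : P0 * P0 = P0) (hcomm : P0 * H0 = H0 * P0)
    (β γ : ℕ → ℝ) (ψ0 : n → ℂ) (hψ0 : star ψ0 ⬝ᵥ ψ0 = 1) (p : ℕ) :
    ‖star (qaoaState H0 H1 β γ ψ0 p) ⬝ᵥ P0.mulVec (qaoaState H0 H1 β γ ψ0 p) -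
        star ψ0 ⬝ᵥ P0.mulVec ψ0‖ ≤
      (∑ j ∈ Finset.range p, |γ j|) *
        ‖(Matrix.toEuclideanCLM (𝕜 := ℂ) (n := n) (P0 * H1 - H1 * P0))‖ := by
  haveI : CompleteSpace (Matrix n n ℂ) := FiniteDimensional.complete ℂ _
  set e := (Matrix.toEuclideanCLM (𝕜 := ℂ) (n := n)) with he
  have hcont : Continuous e :=
    AddMonoidHomClass.continuous_of_bound e 1 (fun A => by rw [one_mul, Matrix.cstar_norm_def])
  have hexp : ∀ A : Matrix n n ℂ, e (exp A) = exp (e A) := fun A => by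
    letI : NormedAlgebra ℚ (Matrix n n ℂ) := NormedAlgebra.restrictScalars ℚ ℂ _
    exact map_exp e hcont A
  set φ : ℕ → EuclideanSpace ℂ n :=
    fun k => (WithLp.equiv 2 (n → ℂ)).symm (qaoaState H0 H1 β γ ψ0 k) with hφ
  have happly : ∀ (A : Matrix n n ℂ) (v : n → ℂ),
      e A ((WithLp.equiv 2 (n → ℂ)).symm v) = (WithLp.equiv 2 (n → ℂ)).symm (A.mulVec v) := by
    intro A v
    rw [he]; exact Matrix.toEuclideanCLM_toLp A v
  have hinner : ∀ (A : Matrix n n ℂ) (v w : n → ℂ),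
      star v ⬝ᵥ A.mulVec w =
        ⟪(WithLp.equiv 2 (n → ℂ)).symm v, e A ((WithLp.equiv 2 (n → ℂ)).symm w)⟫_ℂ := by
    intro A v w
    rw [happly, WithLp.equiv_symm_apply, EuclideanSpace.inner_toLp_toLp, dotProduct_comm]
  have hH0sa : IsSelfAdjoint (e H0) := by
    show star (e H0) = e H0
    rw [← StarHomClass.map_star, Matrix.star_eq_conjTranspose, hH0.eq]
  have hH1sa : IsSelfAdjoint (e H1) := by
    show star (e H1) = e H1
    rw [← StarHomClass.map_star, Matrix.star_eq_conjTranspose, hH1.eq]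
  set Q := e P0 with hQ
  -- norms of the states
  have hφ0 : ‖φ 0‖ ≤ 1 := by
    have h1 : ⟪φ 0, φ 0⟫_ℂ = 1 := by
      rw [hφ]
      rw [WithLp.equiv_symm_apply, EuclideanSpace.inner_toLp_toLp, dotProduct_comm]
      exact hψ0
    have h2 := inner_self_eq_norm_sq_to_K (𝕜 := ℂ) (φ 0)
    rw [h1] at h2
    have h3 : ‖φ 0‖ ^ 2 = 1 := by
      have h4 : ((‖φ 0‖ ^ 2 : ℝ) : ℂ) = 1 := by push_cast; exact h2.symm
      exact_mod_cast h4
    nlinarith [norm_nonneg (φ 0)]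
  have hexp_norm : ∀ (c : ℂ), star c = -c → ∀ (H : Matrix n n ℂ), H.IsHermitian →
      ‖e (exp (c • H))‖ ≤ 1 := by
    intro c hc H hH
    rw [hexp, _root_.map_smul]
    apply aux_norm_exp_le_one _ _ _ hc
    show star (e H) = e H
    rw [← StarHomClass.map_star, Matrix.star_eq_conjTranspose, hH.eq]
  have hφnorm : ∀ k, ‖φ k‖ ≤ 1 := by
    intro k
    induction k with
    | zero => exact hφ0
    | succ k ih =>
      have hstep : φ (k + 1) =
          (e (exp ((-(Complex.I * (β k : ℂ))) • H0)) *
            e (exp ((-(Complex.I * (γ k : ℂ))) • H1))) (φ k) := by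
        show (WithLp.equiv 2 (n → ℂ)).symm (qaoaState H0 H1 β γ ψ0 (k+1)) = _
        simp only [qaoaState]
        rw [← happly, _root_.map_mul]
      rw [hstep]
      calc ‖_‖ ≤ ‖e (exp ((-(Complex.I * (β k : ℂ))) • H0)) *
            e (exp ((-(Complex.I * (γ k : ℂ))) • H1))‖ * ‖φ k‖ :=
            ContinuousLinearMap.le_opNorm _ _
        _ ≤ ‖e (exp ((-(Complex.I * (β k : ℂ))) • H0))‖ *
            ‖e (exp ((-(Complex.I * (γ k : ℂ))) • H1))‖ * ‖φ k‖ := by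
            gcongr
            exact norm_mul_le _ _
        _ ≤ 1 * 1 * 1 := by
            gcongr <;>
              first
                | exact hexp_norm _ (by simp [Complex.ext_iff]) _ hH0
                | exact hexp_norm _ (by simp [Complex.ext_iff]) _ hH1
                | exact ih
        _ = 1 := by ring
  -- the key one-step bound
  have key : ∀ k, ‖⟪φ (k+1), Q (φ (k+1))⟫_ℂ - ⟪φ k, Q (φ k)⟫_ℂ‖ ≤
      |γ k| * ‖e (P0 * H1 - H1 * P0)‖ := by
    intro k
    set U1 : EuclideanSpace ℂ n →L[ℂ] EuclideanSpace ℂ n :=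
      exp ((-(Complex.I * (β k : ℂ))) • e H0) with hU1
    set U2 : EuclideanSpace ℂ n →L[ℂ] EuclideanSpace ℂ n :=
      exp ((-(Complex.I * (γ k : ℂ))) • e H1) with hU2
    have hstep : φ (k + 1) = U1 (U2 (φ k)) := by
      show (WithLp.equiv 2 (n → ℂ)).symm (qaoaState H0 H1 β γ ψ0 (k+1)) = _
      simp only [qaoaState]
      rw [← happly, _root_.map_mul, hexp, hexp, _root_.map_smul, _root_.map_smul, hU1, hU2]
      rfl
    have hQcomm : Q * U1 = U1 * Q := by
      have h1 : Commute Q (e H0) := by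
        show Q * e H0 = e H0 * Q
        rw [hQ, ← _root_.map_mul, ← _root_.map_mul, hcomm]
      exact ((h1.smul_right _).exp_right).eq
    have hU1u : star U1 * U1 = 1 :=
      aux_star_mul_self (e H0) hH0sa _ (by simp [Complex.ext_iff])
    have hconj1 : star U1 * Q * U1 = Q := by
      rw [mul_assoc, hQcomm, ← mul_assoc, hU1u, one_mul]
    have hE1 : ⟪φ (k+1), Q (φ (k+1))⟫_ℂ = ⟪U2 (φ k), Q (U2 (φ k))⟫_ℂ := by
      rw [hstep, aux_inner_conj, hconj1]
    have hE2 : ⟪U2 (φ k), Q (U2 (φ k))⟫_ℂ = ⟪φ k, (star U2 * Q * U2) (φ k)⟫_ℂ :=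
      aux_inner_conj _ _ _
    have hdiff : ⟪φ (k+1), Q (φ (k+1))⟫_ℂ - ⟪φ k, Q (φ k)⟫_ℂ =
        ⟪φ k, (star U2 * Q * U2 - Q) (φ k)⟫_ℂ := by
      rw [hE1, hE2, ContinuousLinearMap.sub_apply, inner_sub_right]
    rw [hdiff]
    calc ‖⟪φ k, (star U2 * Q * U2 - Q) (φ k)⟫_ℂ‖ ≤ ‖star U2 * Q * U2 - Q‖ :=
          aux_exp_quad_bound _ _ (hφnorm k)
      _ ≤ |γ k| * ‖Q * e H1 - e H1 * Q‖ := aux_conj_bound (e H1) Q hH1sa (γ k)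
      _ = |γ k| * ‖e (P0 * H1 - H1 * P0)‖ := by rw [hQ, ← _root_.map_mul, ← _root_.map_mul, ← _root_.map_sub]
  -- telescoping
  have main : ∀ m : ℕ, ‖⟪φ m, Q (φ m)⟫_ℂ - ⟪φ 0, Q (φ 0)⟫_ℂ‖ ≤
      (∑ j ∈ Finset.range m, |γ j|) * ‖e (P0 * H1 - H1 * P0)‖ := by
    intro m
    induction m with
    | zero => simp
    | succ m ih =>
      calc ‖⟪φ (m+1), Q (φ (m+1))⟫_ℂ - ⟪φ 0, Q (φ 0)⟫_ℂ‖
          ≤ ‖⟪φ (m+1), Q (φ (m+1))⟫_ℂ - ⟪φ m, Q (φ m)⟫_ℂ‖ +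
            ‖⟪φ m, Q (φ m)⟫_ℂ - ⟪φ 0, Q (φ 0)⟫_ℂ‖ := by
            have := norm_sub_le_norm_sub_add_norm_sub (⟪φ (m+1), Q (φ (m+1))⟫_ℂ)
              (⟪φ m, Q (φ m)⟫_ℂ) (⟪φ 0, Q (φ 0)⟫_ℂ)
            exact this
        _ ≤ |γ m| * ‖e (P0 * H1 - H1 * P0)‖ +
            (∑ j ∈ Finset.range m, |γ j|) * ‖e (P0 * H1 - H1 * P0)‖ :=
            add_le_add (key m) ih
        _ = (∑ j ∈ Finset.range (m+1), |γ j|) * ‖e (P0 * H1 - H1 * P0)‖ := by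
            rw [Finset.sum_range_succ]; ring
  have hgoal1 : star (qaoaState H0 H1 β γ ψ0 p) ⬝ᵥ P0.mulVec (qaoaState H0 H1 β γ ψ0 p) =
      ⟪φ p, Q (φ p)⟫_ℂ := hinner P0 _ _
  have hgoal0 : star ψ0 ⬝ᵥ P0.mulVec ψ0 = ⟪φ 0, Q (φ 0)⟫_ℂ := hinner P0 _ _
  rw [hgoal1, hgoal0]
  exact main p
end

section
/- Under the QAOA overlap lemma with all phase angles bounded by 2π, if a p-round QAOA protocol starting from the uniform superposition |ψ₀⟩ ∈ ℂ^N with diagonal search Hamiltonian H₁ (Boolean objective marking m states) produces a state with total probability λ on the marked set, then p ≥ (1 − (√(λm) + √((1−λ)(N−m)))²/N) / (2π · √(m(N−m))/N). In particular, for fixed λ and m ≪ N, p = Ω(√(N/m)). -/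
open Finset Matrix Real

lemma exp_mulVec_eigen {n : Type*} [Fintype n] [DecidableEq n] (A : Matrix n n ℂ) (v : n → ℂ)
    (c : ℂ) (h : A.mulVec v = c • v) :
    (NormedSpace.exp A).mulVec v = Complex.exp c • v := by
  letI : SeminormedRing (Matrix n n ℂ) := Matrix.linftyOpSemiNormedRing
  letI : NormedRing (Matrix n n ℂ) := Matrix.linftyOpNormedRing
  letI : NormedAlgebra ℂ (Matrix n n ℂ) := Matrix.linftyOpNormedAlgebra
  have hpow : ∀ k : ℕ, (A ^ k).mulVec v = (c ^ k) • v := by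
    intro k
    induction k with
    | zero => simp [Matrix.one_mulVec]
    | succ k ih =>
        rw [pow_succ', ← Matrix.mulVec_mulVec, ih]
        rw [Matrix.mulVec_smul, h, smul_smul]
        ring_nf
  let L : Matrix n n ℂ →ₗ[ℂ] (n → ℂ) :=
    { toFun := fun M => M.mulVec v
      map_add' := fun M M' => Matrix.add_mulVec M M' v
      map_smul' := fun a M => Matrix.smul_mulVec a M v }
  have hL : Continuous L := L.continuous_of_finiteDimensional
  have hsum : Summable fun k : ℕ => (((Nat.factorial k : ℕ) : ℂ)⁻¹) • A ^ k :=
    NormedSpace.expSeries_summable' A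
  have h1 : (NormedSpace.exp A).mulVec v
      = ∑' k : ℕ, (((Nat.factorial k : ℕ) : ℂ)⁻¹) • (c ^ k • v) := by
    have := (L.toContinuousLinearMap).map_tsum hsum
    rw [NormedSpace.exp_eq_tsum ℂ]
    simpa [L, hpow, Matrix.smul_mulVec] using this
  rw [h1]
  have h2 : ∀ k : ℕ, (((Nat.factorial k : ℕ) : ℂ)⁻¹) • (c ^ k • v) = ((((Nat.factorial k : ℕ) : ℂ)⁻¹) * c ^ k) • v := by
    intro k; rw [smul_smul]
  simp_rw [h2]
  have hsum2 : Summable fun k : ℕ => (((Nat.factorial k : ℕ) : ℂ)⁻¹) • c ^ k :=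
    NormedSpace.expSeries_summable' c
  have h3 : ∑' k : ℕ, ((((Nat.factorial k : ℕ) : ℂ)⁻¹) * c ^ k) • v
      = (∑' k : ℕ, (((Nat.factorial k : ℕ) : ℂ)⁻¹) * c ^ k) • v := by
    let M : ℂ →ₗ[ℂ] (n → ℂ) :=
      { toFun := fun a => a • v
        map_add' := fun a b => add_smul a b v
        map_smul' := fun a b => by simp [smul_smul] }
    have := (M.toContinuousLinearMap).map_tsum (L := SummationFilter.unconditional ℕ) (f := fun k : ℕ => (((Nat.factorial k : ℕ) : ℂ)⁻¹) * c ^ k) ?_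
    · simpa [M] using this.symm
    · simpa [smul_eq_mul] using hsum2
  rw [h3]
  congr 1
  rw [Complex.exp_eq_exp_ℂ, NormedSpace.exp_eq_tsum ℂ]
  simp [smul_eq_mul]

lemma exp_unitary_aux {n : Type*} [Fintype n] [DecidableEq n] (H : Matrix n n ℂ)
    (hH : H.IsHermitian) (t : ℝ) :
    (NormedSpace.exp ((-(Complex.I * (t : ℂ))) • H))ᴴ *
      NormedSpace.exp ((-(Complex.I * (t : ℂ))) • H) = 1 := by
  have h1 : ((-(Complex.I * (t : ℂ))) • H)ᴴ = -((-(Complex.I * (t : ℂ))) • H) := by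
    rw [Matrix.conjTranspose_smul, hH.eq, ← neg_smul]
    congr 1
    simp [Complex.ext_iff]
  rw [← Matrix.exp_conjTranspose, h1,
    ← Matrix.exp_add_of_commute _ _ (Commute.neg_left (Commute.refl ((-(Complex.I * (t : ℂ))) • H)))]
  simp [NormedSpace.exp_zero]

lemma dot_star_self {n : Type*} [Fintype n] (w : n → ℂ) :
    ((∑ z, ‖w z‖ ^ 2 : ℝ) : ℂ) = star w ⬝ᵥ w := by
  push_cast
  simp only [dotProduct, Pi.star_apply, Complex.star_def]
  congr 1
  ext z
  rw [Complex.conj_mul']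

lemma unitary_mulVec_normsum {n : Type*} [Fintype n] [DecidableEq n] (U : Matrix n n ℂ)
    (hU : Uᴴ * U = 1) (w : n → ℂ) :
    ∑ z, ‖U.mulVec w z‖ ^ 2 = ∑ z, ‖w z‖ ^ 2 := by
  have h : star (U.mulVec w) ⬝ᵥ (U.mulVec w) = star w ⬝ᵥ w := by
    rw [Matrix.star_mulVec, Matrix.dotProduct_mulVec, Matrix.vecMul_vecMul, hU,
      Matrix.vecMul_one]
  have := (dot_star_self (U.mulVec w)).trans (h.trans (dot_star_self w).symm)
  exact_mod_cast this

lemma exp_phase_diagonal {n : Type*} [Fintype n] [DecidableEq n] (S : Finset n) (γ : ℝ) :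
    NormedSpace.exp
        ((-(Complex.I * (γ : ℂ))) • (Matrix.diagonal fun z => if z ∈ S then (1 : ℂ) else 0))
      = Matrix.diagonal (fun z => if z ∈ S then Complex.exp (-(Complex.I * γ)) else 1) := by
  rw [← Matrix.diagonal_smul, Matrix.exp_diagonal, Pi.exp_def]
  ext z j
  by_cases hz : z ∈ S <;> by_cases hzj : z = j <;>
    simp [Matrix.diagonal_apply, hz, hzj, smul_eq_mul, ← Complex.exp_eq_exp_ℂ,
      NormedSpace.exp_zero, apply_ite Complex.exp, Complex.exp_zero]

lemma sum_mulVec_eigen {n : Type*} [Fintype n] [DecidableEq n]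
    (U : Matrix n n ℂ) (ψ0 : n → ℂ) (a u : ℂ) (ha : a ≠ 0) (hconj : starRingEnd ℂ a = a)
    (hψ0 : ∀ z, ψ0 z = a)
    (hU : Uᴴ.mulVec ψ0 = (starRingEnd ℂ u) • ψ0) (w : n → ℂ) :
    ∑ z, U.mulVec w z = u * ∑ z, w z := by
  have h1 : Matrix.vecMul (star ψ0) U = u • star ψ0 := by
    have h := congrArg star hU
    rw [Matrix.star_mulVec, Matrix.conjTranspose_conjTranspose] at h
    rw [h, star_smul]
    simp
  have h2 : ∀ x : n → ℂ, star ψ0 ⬝ᵥ x = a * ∑ z, x z := by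
    intro x
    simp [dotProduct, hψ0, Finset.mul_sum, hconj]
  have h3 := Matrix.dotProduct_mulVec (star ψ0) U w
  rw [h1, smul_dotProduct, h2, h2, smul_eq_mul] at h3
  apply mul_left_cancel₀ ha
  rw [h3]; ring

lemma norm_sum_le_sqrt_card {α : Type*} (s : Finset α) (f : α → ℂ) :
    ‖∑ z ∈ s, f z‖ ≤ Real.sqrt ((s.card : ℝ) * ∑ z ∈ s, ‖f z‖ ^ 2) := by
  have h1 : ‖∑ z ∈ s, f z‖ ≤ ∑ z ∈ s, ‖f z‖ := norm_sum_le _ _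
  have h2 : (∑ z ∈ s, ‖f z‖) ^ 2 ≤ (s.card : ℝ) * ∑ z ∈ s, ‖f z‖ ^ 2 := by
    exact_mod_cast sq_sum_le_card_mul_sum_sq (s := s) (f := fun z => ‖f z‖)
  calc ‖∑ z ∈ s, f z‖ ≤ ∑ z ∈ s, ‖f z‖ := h1
    _ = Real.sqrt ((∑ z ∈ s, ‖f z‖) ^ 2) := (Real.sqrt_sq (by positivity)).symm
    _ ≤ _ := Real.sqrt_le_sqrt h2

set_option maxHeartbeats 2000000 in
/-- QAOA lower bound for unstructured search: a `p`-round QAOA, starting from the uniform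
superposition `ψ₀`, with a diagonal search Hamiltonian `H₁` marking a set `S` of `m` out of
`N` states, a Hermitian mixer `H₀` having `ψ₀` as eigenvector, and phase angles bounded by
`2π`, which produces total probability `λ` on the marked set, must satisfy
`p ≥ (1 − (√(λm) + √((1−λ)(N−m)))²/N) / (2π·√(m(N−m))/N)`. -/
theorem qaoa_search_rounds_lower_bound (N m p : ℕ) (hN : 0 < N) (hm0 : 0 < m) (hmN : m < N)
    (S : Finset (Fin N)) (hS : S.card = m)
    (H0 H1 : Matrix (Fin N) (Fin N) ℂ) (hH0 : H0.IsHermitian)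
    (hH1 : H1 = Matrix.diagonal fun z => if z ∈ S then (1 : ℂ) else 0)
    (ψ0 : Fin N → ℂ) (hψ0 : ∀ z, ψ0 z = ((Real.sqrt N)⁻¹ : ℂ))
    (heig : ∃ c : ℂ, H0.mulVec ψ0 = c • ψ0)
    (β γ : ℕ → ℝ) (hγ : ∀ j, |γ j| ≤ 2 * π)
    (lam : ℝ) (hlam : ∑ z ∈ S, ‖qaoaState H0 H1 β γ ψ0 p z‖ ^ 2 = lam) :
    (1 - (Real.sqrt (lam * m) + Real.sqrt ((1 - lam) * ((N : ℝ) - m))) ^ 2 / N) /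
        (2 * π * (Real.sqrt ((m : ℝ) * ((N : ℝ) - m)) / N)) ≤ (p : ℝ) := by
  obtain ⟨c, hc⟩ := heig
  have hNR : (0:ℝ) < N := by exact_mod_cast hN
  have hmR : (1:ℝ) ≤ m := by exact_mod_cast hm0
  have hNmR : (1:ℝ) ≤ (N:ℝ) - m := by
    have : (m:ℝ) + 1 ≤ N := by exact_mod_cast hmN
    linarith
  have hsqpos : 0 < Real.sqrt N := Real.sqrt_pos.2 hNR
  have ha0 : ((Real.sqrt N : ℝ) : ℂ)⁻¹ ≠ 0 := by
    simp [Complex.ofReal_ne_zero, ne_of_gt hsqpos]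
  have haconj : starRingEnd ℂ ((Real.sqrt N : ℝ) : ℂ)⁻¹ = ((Real.sqrt N : ℝ) : ℂ)⁻¹ := by
    rw [map_inv₀, Complex.conj_ofReal]
  -- H1 is Hermitian
  have hH1herm : H1.IsHermitian := by
    rw [hH1]
    refine Matrix.isHermitian_diagonal_iff.2 fun i => ?_
    by_cases h : i ∈ S <;> simp [_root_.IsSelfAdjoint, h]
  set ψ : ℕ → Fin N → ℂ := qaoaState H0 H1 β γ ψ0 with hψdef
  set Uβ : ℕ → Matrix (Fin N) (Fin N) ℂ :=
    fun k => NormedSpace.exp ((-(Complex.I * (β k : ℂ))) • H0) with hUβdef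
  set Uγ : ℕ → Matrix (Fin N) (Fin N) ℂ :=
    fun k => NormedSpace.exp ((-(Complex.I * (γ k : ℂ))) • H1) with hUγdef
  have hstep : ∀ k, ψ (k+1) = (Uβ k).mulVec ((Uγ k).mulVec (ψ k)) := by
    intro k
    rw [Matrix.mulVec_mulVec]
    rfl
  have hUβu : ∀ k, (Uβ k)ᴴ * Uβ k = 1 := fun k => exp_unitary_aux H0 hH0 (β k)
  have hUγu : ∀ k, (Uγ k)ᴴ * Uγ k = 1 := fun k => exp_unitary_aux H1 hH1herm (γ k)
  -- norm preservation
  have hnorm0 : ∑ z, ‖ψ0 z‖ ^ 2 = 1 := by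
    have : ∀ z : Fin N, ‖ψ0 z‖ ^ 2 = (N:ℝ)⁻¹ := by
      intro z
      rw [hψ0 z, norm_inv, Complex.norm_real, Real.norm_eq_abs,
        abs_of_nonneg (Real.sqrt_nonneg _), ← Real.sqrt_inv, Real.sq_sqrt (by positivity)]
    rw [Finset.sum_congr rfl fun z _ => this z, Finset.sum_const, Finset.card_univ,
      Fintype.card_fin, nsmul_eq_mul]
    field_simp
  have hnorm : ∀ k, ∑ z, ‖ψ k z‖ ^ 2 = 1 := by
    intro k
    induction k with
    | zero => exact hnorm0
    | succ k ih =>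
        rw [hstep k, unitary_mulVec_normsum _ (hUβu k), unitary_mulVec_normsum _ (hUγu k), ih]
  -- c is real
  have hψ0dot : star ψ0 ⬝ᵥ ψ0 = 1 := by
    have h := dot_star_self ψ0
    rw [hnorm0] at h
    simpa using h.symm
  have hcconj : starRingEnd ℂ c = c := by
    have h1 : star ψ0 ⬝ᵥ (H0 *ᵥ ψ0) = c := by
      rw [hc, dotProduct_smul, hψ0dot, smul_eq_mul, mul_one]
    have e2 : star (H0 *ᵥ ψ0) ⬝ᵥ ψ0 = star ψ0 ⬝ᵥ (H0 *ᵥ ψ0) := by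
      rw [Matrix.star_mulVec, hH0.eq, ← Matrix.dotProduct_mulVec]
    have h2 : starRingEnd ℂ (star ψ0 ⬝ᵥ (H0 *ᵥ ψ0)) = star ψ0 ⬝ᵥ (H0 *ᵥ ψ0) := by
      have e1 := congrArg star (Matrix.star_dotProduct ψ0 (H0 *ᵥ ψ0))
      rw [star_star] at e1
      calc starRingEnd ℂ (star ψ0 ⬝ᵥ (H0 *ᵥ ψ0)) = star (star ψ0 ⬝ᵥ (H0 *ᵥ ψ0)) := rfl
        _ = star (H0 *ᵥ ψ0) ⬝ᵥ ψ0 := e1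
        _ = star ψ0 ⬝ᵥ (H0 *ᵥ ψ0) := e2
    rw [h1] at h2
    exact h2
  have hcim : c.im = 0 := Complex.conj_eq_iff_im.mp hcconj
  -- eigen action of mixer adjoint
  have hUβeig : ∀ k, (Uβ k)ᴴ.mulVec ψ0 = Complex.exp (Complex.I * (β k : ℂ) * c) • ψ0 := by
    intro k
    have h1 : ((-(Complex.I * (β k : ℂ))) • H0)ᴴ = (Complex.I * (β k : ℂ)) • H0 := by
      rw [Matrix.conjTranspose_smul, hH0.eq]
      congr 1
      simp [Complex.ext_iff]
    rw [hUβdef]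
    show (NormedSpace.exp _)ᴴ *ᵥ _ = _
    rw [← Matrix.exp_conjTranspose, h1]
    apply exp_mulVec_eigen
    rw [Matrix.smul_mulVec, hc, smul_smul]
  set u : ℕ → ℂ := fun k => Complex.exp (-(Complex.I * (β k : ℂ) * c)) with hudef
  have hunorm : ∀ k, ‖u k‖ = 1 := by
    intro k
    rw [hudef]
    show ‖Complex.exp _‖ = 1
    rw [Complex.norm_exp]
    have : (-(Complex.I * (β k : ℂ) * c)).re = 0 := by
      simp [Complex.mul_re, Complex.mul_im, hcim]
    rw [this, Real.exp_zero]
  have huconj : ∀ k, starRingEnd ℂ (u k) = Complex.exp (Complex.I * (β k : ℂ) * c) := by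
    intro k
    rw [hudef]
    show starRingEnd ℂ (Complex.exp _) = _
    rw [← Complex.exp_conj]
    congr 1
    simp [Complex.ext_iff, hcim]
  -- sum transfer through Uβ
  have hsumUβ : ∀ k (w : Fin N → ℂ), ∑ z, (Uβ k).mulVec w z = u k * ∑ z, w z := by
    intro k w
    refine sum_mulVec_eigen (Uβ k) ψ0 (((Real.sqrt N : ℝ) : ℂ)⁻¹) (u k) ha0 haconj
      (fun z => hψ0 z) ?_ w
    rw [hUβeig k, huconj k]
  -- Uγ is a diagonal phase
  set e : ℕ → ℂ := fun k => Complex.exp (-(Complex.I * (γ k : ℂ))) with hedef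
  have henorm : ∀ k, ‖e k‖ = 1 := by
    intro k
    rw [hedef]
    show ‖Complex.exp _‖ = 1
    rw [Complex.norm_exp]
    norm_num
  have hsumUγ : ∀ k (w : Fin N → ℂ),
      ∑ z, (Uγ k).mulVec w z = e k * (∑ z ∈ S, w z) + ∑ z ∈ Sᶜ, w z := by
    intro k w
    have hUγdiag : Uγ k = Matrix.diagonal (fun z => if z ∈ S then e k else 1) := by
      rw [hUγdef]
      show NormedSpace.exp _ = _
      rw [hH1]
      exact exp_phase_diagonal S (γ k)
    have hentry : ∀ z, (Uγ k).mulVec w z = (if z ∈ S then e k else 1) * w z := by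
      intro z
      rw [hUγdiag, Matrix.mulVec_diagonal]
    rw [Finset.sum_congr rfl fun z _ => hentry z, ← Finset.sum_add_sum_compl S]
    congr 1
    · rw [Finset.mul_sum]
      exact Finset.sum_congr rfl fun z hz => by simp [hz]
    · exact Finset.sum_congr rfl fun z hz => by simp [Finset.mem_compl.mp hz]
  -- marked / unmarked mass
  set lamk : ℕ → ℝ := fun k => ∑ z ∈ S, ‖ψ k z‖ ^ 2 with hlamkdef
  have hlamk_nonneg : ∀ k, 0 ≤ lamk k := fun k => Finset.sum_nonneg fun z _ => by positivity
  have hcompl : ∀ k, ∑ z ∈ Sᶜ, ‖ψ k z‖ ^ 2 = 1 - lamk k := by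
    intro k
    have h := Finset.sum_add_sum_compl S (fun z => ‖ψ k z‖ ^ 2)
    rw [hnorm k] at h
    have h' : lamk k + ∑ z ∈ Sᶜ, ‖ψ k z‖ ^ 2 = 1 := h
    linarith
  have hlamk_le : ∀ k, lamk k ≤ 1 := by
    intro k
    have h2 : 0 ≤ ∑ z ∈ Sᶜ, ‖ψ k z‖ ^ 2 := Finset.sum_nonneg fun z _ => by positivity
    rw [hcompl k] at h2
    linarith
  have hcardc : ((Sᶜ : Finset (Fin N)).card : ℝ) = (N:ℝ) - m := by
    rw [Finset.card_compl, hS, Fintype.card_fin]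
    push_cast [Nat.cast_sub (le_of_lt hmN)]
    ring
  have hsbound : ∀ k, ‖∑ z ∈ S, ψ k z‖ ≤ Real.sqrt ((m:ℝ) * lamk k) := by
    intro k
    have h := norm_sum_le_sqrt_card S (ψ k)
    rwa [hS] at h
  have htbound : ∀ k, ‖∑ z ∈ Sᶜ, ψ k z‖ ≤ Real.sqrt (((N:ℝ) - m) * (1 - lamk k)) := by
    intro k
    have h := norm_sum_le_sqrt_card Sᶜ (ψ k)
    rwa [hcardc, hcompl k] at h
  set R : ℝ := Real.sqrt ((m:ℝ) * ((N:ℝ) - m)) with hRdef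
  have hRpos : 0 < R := Real.sqrt_pos.2 (by nlinarith)
  have hst : ∀ k, ‖∑ z ∈ S, ψ k z‖ * ‖∑ z ∈ Sᶜ, ψ k z‖ ≤ R * (1/2) := by
    intro k
    have h3 : ‖∑ z ∈ S, ψ k z‖ * ‖∑ z ∈ Sᶜ, ψ k z‖
        ≤ Real.sqrt ((m:ℝ) * lamk k) * Real.sqrt (((N:ℝ) - m) * (1 - lamk k)) :=
      mul_le_mul (hsbound k) (htbound k) (norm_nonneg _) (Real.sqrt_nonneg _)
    have h4 : Real.sqrt ((m:ℝ) * lamk k) * Real.sqrt (((N:ℝ) - m) * (1 - lamk k))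
        = Real.sqrt (((m:ℝ) * ((N:ℝ) - m)) * (lamk k * (1 - lamk k))) := by
      rw [← Real.sqrt_mul (mul_nonneg (by positivity) (hlamk_nonneg k))]
      congr 1
      ring
    have h4' : Real.sqrt (((m:ℝ) * ((N:ℝ) - m)) * (lamk k * (1 - lamk k)))
        = R * Real.sqrt (lamk k * (1 - lamk k)) := by
      rw [hRdef, ← Real.sqrt_mul (by nlinarith : (0:ℝ) ≤ (m:ℝ) * ((N:ℝ) - m))]
    have h5 : Real.sqrt (lamk k * (1 - lamk k)) ≤ 1/2 := by
      have h6 : lamk k * (1 - lamk k) ≤ (1/2)^2 := by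
        nlinarith [sq_nonneg (lamk k - 1/2)]
      calc Real.sqrt (lamk k * (1 - lamk k)) ≤ Real.sqrt ((1/2)^2) := Real.sqrt_le_sqrt h6
        _ = 1/2 := Real.sqrt_sq (by norm_num)
    calc ‖∑ z ∈ S, ψ k z‖ * ‖∑ z ∈ Sᶜ, ψ k z‖
        ≤ R * Real.sqrt (lamk k * (1 - lamk k)) := by rw [← h4', ← h4]; exact h3
      _ ≤ R * (1/2) := by
          have := Real.sqrt_nonneg (lamk k * (1 - lamk k))
          nlinarith [hRpos.le]
  have hns : ∀ z : ℂ, ‖z‖ ^ 2 = Complex.normSq z := fun z => by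
    rw [Complex.sq_norm]
  have hAstep : ∀ k, ∑ z, ψ (k+1) z
      = u k * (e k * (∑ z ∈ S, ψ k z) + ∑ z ∈ Sᶜ, ψ k z) := by
    intro k
    rw [hstep k, hsumUβ k, hsumUγ k]
  have honestep : ∀ k, |‖∑ z, ψ (k+1) z‖ ^ 2 - ‖∑ z, ψ k z‖ ^ 2| ≤ 2 * R := by
    intro k
    set s := ∑ z ∈ S, ψ k z with hsdef
    set t := ∑ z ∈ Sᶜ, ψ k z with htdef
    have hA0 : ∑ z, ψ k z = s + t := (Finset.sum_add_sum_compl S _).symm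
    have hA1 : ‖∑ z, ψ (k+1) z‖ ^ 2 = ‖e k * s + t‖ ^ 2 := by
      rw [hAstep k, norm_mul, hunorm k, one_mul]
    have hnseq : Complex.normSq (e k) = 1 := by
      have h := hns (e k)
      rw [henorm k] at h
      simpa using h.symm
    have hre : ((e k * s) * (starRingEnd ℂ t)).re - (s * (starRingEnd ℂ t)).re
        = (((e k - 1) * s) * (starRingEnd ℂ t)).re := by
      rw [← Complex.sub_re]
      congr 1
      ring
    have key : ‖e k * s + t‖ ^ 2 - ‖s + t‖ ^ 2
        = 2 * (((e k - 1) * s) * (starRingEnd ℂ t)).re := by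
      rw [hns, hns, Complex.normSq_add, Complex.normSq_add, Complex.normSq_mul, hnseq, one_mul, ← hre]
      ring
    have hb : |(((e k - 1) * s) * (starRingEnd ℂ t)).re| ≤ 2 * (‖s‖ * ‖t‖) := by
      have h1 : |(((e k - 1) * s) * (starRingEnd ℂ t)).re|
          ≤ ‖((e k - 1) * s) * (starRingEnd ℂ t)‖ := by
        exact Complex.abs_re_le_norm _
      have h2 : ‖((e k - 1) * s) * (starRingEnd ℂ t)‖ = ‖e k - 1‖ * ‖s‖ * ‖t‖ := by
        rw [norm_mul, norm_mul, RCLike.norm_conj]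
      have h3 : ‖e k - 1‖ ≤ 2 := by
        calc ‖e k - 1‖ ≤ ‖e k‖ + ‖(1:ℂ)‖ := norm_sub_le _ _
          _ = 2 := by rw [henorm k]; norm_num
      calc |(((e k - 1) * s) * (starRingEnd ℂ t)).re|
          ≤ ‖((e k - 1) * s) * (starRingEnd ℂ t)‖ := h1
        _ = ‖e k - 1‖ * ‖s‖ * ‖t‖ := h2
        _ = ‖e k - 1‖ * (‖s‖ * ‖t‖) := by ring
        _ ≤ 2 * (‖s‖ * ‖t‖) :=
            mul_le_mul_of_nonneg_right h3 (mul_nonneg (norm_nonneg s) (norm_nonneg t))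
    rw [hA1, hA0, key]
    have hst' := hst k
    calc |2 * (((e k - 1) * s) * (starRingEnd ℂ t)).re|
        = 2 * |(((e k - 1) * s) * (starRingEnd ℂ t)).re| := by rw [abs_mul]; norm_num
      _ ≤ 2 * (2 * (‖s‖ * ‖t‖)) := by linarith
      _ ≤ 2 * (2 * (R * (1/2))) := by linarith [mul_nonneg (norm_nonneg s) (norm_nonneg t)]
      _ = 2 * R := by ring
  -- telescoping
  have htel : ∀ k, (N:ℝ) - ‖∑ z, ψ k z‖ ^ 2 ≤ 2 * R * k := by
    intro k
    induction k with
    | zero =>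
        have hA00 : ∑ z, ψ0 z = (N:ℂ) * ((Real.sqrt N : ℝ):ℂ)⁻¹ := by
          rw [Finset.sum_congr rfl fun z _ => hψ0 z, Finset.sum_const, Finset.card_univ,
            Fintype.card_fin, nsmul_eq_mul]
        have hg0 : ‖∑ z, ψ0 z‖ ^ 2 = (N:ℝ) := by
          rw [hA00, norm_mul, norm_inv, Complex.norm_real, Complex.norm_natCast,
            Real.norm_eq_abs, abs_of_nonneg (Real.sqrt_nonneg _), mul_pow, inv_pow,
            Real.sq_sqrt hNR.le, sq]
          field_simp
        have hz : ψ 0 = ψ0 := rfl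
        rw [hz, hg0]
        simp
    | succ k ih =>
        have h := abs_le.mp (honestep k)
        push_cast
        nlinarith [h.1, h.2]
  -- Cauchy-Schwarz at time p
  have hlamp : lamk p = lam := hlam
  have hlam0 : 0 ≤ lam := hlamp ▸ hlamk_nonneg p
  have hlam1 : lam ≤ 1 := hlamp ▸ hlamk_le p
  have hQ : ‖∑ z, ψ p z‖ ^ 2
      ≤ (Real.sqrt (lam * m) + Real.sqrt ((1 - lam) * ((N:ℝ) - m))) ^ 2 := by
    have h1 : ‖∑ z, ψ p z‖ ≤ Real.sqrt (lam * m) + Real.sqrt ((1 - lam) * ((N:ℝ) - m)) := by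
      rw [show ∑ z, ψ p z = (∑ z ∈ S, ψ p z) + ∑ z ∈ Sᶜ, ψ p z from
        (Finset.sum_add_sum_compl S _).symm]
      calc ‖(∑ z ∈ S, ψ p z) + ∑ z ∈ Sᶜ, ψ p z‖
          ≤ ‖∑ z ∈ S, ψ p z‖ + ‖∑ z ∈ Sᶜ, ψ p z‖ := norm_add_le _ _
        _ ≤ Real.sqrt ((m:ℝ) * lamk p) + Real.sqrt (((N:ℝ) - m) * (1 - lamk p)) :=
            add_le_add (hsbound p) (htbound p)
        _ = Real.sqrt (lam * m) + Real.sqrt ((1 - lam) * ((N:ℝ) - m)) := by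
            rw [hlamp, mul_comm ((m:ℝ)) lam, mul_comm (((N:ℝ) - m)) (1 - lam)]
    exact pow_le_pow_left₀ (norm_nonneg _) h1 2
  clear_value ψ Uβ Uγ u e lamk
  set Q : ℝ := (Real.sqrt (lam * m) + Real.sqrt ((1 - lam) * ((N:ℝ) - m))) ^ 2 with hQdef
  have hfinal : (N:ℝ) - Q ≤ (p:ℝ) * (2 * π * R) := by
    have h1 := htel p
    have hp0 : (0:ℝ) ≤ p := Nat.cast_nonneg p
    have hQ' : (N:ℝ) - Q ≤ (N:ℝ) - ‖∑ z, ψ p z‖ ^ 2 := by linarith [hQ]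
    have hπ : (1:ℝ) ≤ π := by linarith [Real.pi_gt_three]
    have h2 : 2 * R * (p:ℝ) ≤ (p:ℝ) * (2 * π * R) := by
      have hh := mul_nonneg (mul_nonneg hRpos.le hp0) (sub_nonneg.2 hπ)
      nlinarith [hh]
    linarith
  have hden : 0 < 2 * π * (R / N) := by
    have := Real.pi_pos
    positivity
  rw [div_le_iff₀ hden]
  have hrw : 1 - Q / N = ((N:ℝ) - Q) / N := by field_simp
  rw [hrw, div_le_iff₀ hNR]
  have hDN : (p:ℝ) * (2 * π * (R / N)) * N = (p:ℝ) * (2 * π * R) := by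
    field_simp
  rw [hDN]
  exact hfinal
end
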